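/- arXiv:2001.01552 — 2 statements merged into one kernel-verified Lean document; each statement's English description precedes it below -/
import Mathlib

section
/- For every real number s ≥ 1 and every positive integer d, there exists a real number s' ≥ s such that the following holds: if B₁ and B₂ are convex shapes in ℝ^d that are ⊑_s-comparable and vol(B₁) ≤ vol(B₂), then B₁ ⊑_{s'} B₂. -/
open MeasureTheory Set Pointwise Metric Function
open scoped RealInnerProductSpace ENNReal

noncomputable section

/-- `ℝ^d` as a Euclidean space. -/
abbrev Euc (d : ℕ) := EuclideanSpace ℝ (Fin d)

/-- A shape: a compact set that is non-degenerate, i.e. not contained in a proper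
affine subspace. -/
def IsShape {d : ℕ} (B : Set (Euc d)) : Prop :=
  IsCompact B ∧ affineSpan ℝ B = ⊤

/-- `B₁ ⊑ₛ B₂`: for every `x ∈ B₂` there is a translate `B₁'` of `B₁` with `x ∈ B₁'`
and `vol (B₁' ∩ B₂) ≥ vol B₁ / s`. -/
def SqIn {d : ℕ} (s : ℝ) (B₁ B₂ : Set (Euc d)) : Prop :=
  ∀ x ∈ B₂, ∃ v : Euc d, x ∈ v +ᵥ B₁ ∧
    volume B₁ / ENNReal.ofReal s ≤ volume ((v +ᵥ B₁) ∩ B₂)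

/-- `B₁` and `B₂` are `⊑ₛ`-comparable. -/
def SqComparable {d : ℕ} (s : ℝ) (B₁ B₂ : Set (Euc d)) : Prop :=
  SqIn s B₁ B₂ ∨ SqIn s B₂ B₁

/-- `B₁ ≤ₖ B₂`: some translate of `B₁` is contained in `k • B₂`. -/
def LeK {d : ℕ} (k : ℝ) (B₁ B₂ : Set (Euc d)) : Prop :=
  ∃ v : Euc d, v +ᵥ B₁ ⊆ k • B₂

/-- `B₁ ≤_{k,s} B₂`: for every `x ∈ k • B₂` there are a translate `B₁'` of `B₁` and a
translate `B₁''` of `s • B₁` with `x ∈ B₁''` and `B₁' ⊆ B₁'' ∩ k • B₂`. -/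
def LeKS {d : ℕ} (k s : ℝ) (B₁ B₂ : Set (Euc d)) : Prop :=
  ∀ x ∈ k • B₂, ∃ v w : Euc d,
    x ∈ w +ᵥ (s • B₁) ∧ v +ᵥ B₁ ⊆ (w +ᵥ (s • B₁)) ∩ (k • B₂)

/-- An intersection representation of a graph in `ℝ^d`. -/
def IsIntersectionRep {V : Type*} {d : ℕ} (G : SimpleGraph V) (φ : V → Set (Euc d)) : Prop :=
  (∀ v, (φ v).Nonempty) ∧ ∀ u v : V, u ≠ v → ((φ u ∩ φ v).Nonempty ↔ G.Adj u v)

/-- A representation is `c`-thin if every point lies in at most `c` of the sets. -/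
def IsThin {V : Type*} {d : ℕ} (c : ℝ) (φ : V → Set (Euc d)) : Prop :=
  ∀ x : Euc d, ({v : V | x ∈ φ v}.ncard : ℝ) ≤ c

/-- A `(c,⊑ₛ)`-tame representation. -/
def IsTame {V : Type*} {d : ℕ} (c s : ℝ) (G : SimpleGraph V) (φ : V → Set (Euc d)) : Prop :=
  IsIntersectionRep G φ ∧ IsThin c φ ∧
    (∀ v, Convex ℝ (φ v) ∧ IsShape (φ v)) ∧
    ∀ u v : V, SqComparable s (φ u) (φ v)

/-- An `S`-shaped representation: each vertex is assigned a translate of a shape in `S`. -/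
def IsSShaped {V : Type*} {d : ℕ} (S : Set (Set (Euc d))) (φ : V → Set (Euc d)) : Prop :=
  ∀ v, ∃ B ∈ S, ∃ t : Euc d, φ v = t +ᵥ B

/-- `X` is a balanced separator: every component of `G - X` has at most `(2/3)|V(G)|`
vertices. -/
def IsBalancedSeparator {V : Type*} [Fintype V] (G : SimpleGraph V) (X : Set V) : Prop :=
  ∀ C : (G.induce Xᶜ).ConnectedComponent,
    (C.supp.ncard : ℝ) ≤ 2 / 3 * Fintype.card V

/-- `L_{G,≺,r}(v)`, where the linear ordering `≺` is encoded by an injective `ρ : V → ℕ`: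
the set of vertices `x ⪯ v` reachable from `v` by a path of length at most `r` all of whose
internal vertices are `≻ v`. -/
def Lset {V : Type*} (G : SimpleGraph V) (ρ : V → ℕ) (r : ℕ) (v : V) : Set V :=
  {x | ρ x ≤ ρ v ∧ ∃ p : G.Walk v x, p.IsPath ∧ p.length ≤ r ∧
    ∀ z ∈ p.support, z ≠ v → z ≠ x → ρ v < ρ z}

/-- The height of a set: the least `h ≥ 0` such that the set lies between two parallel
hyperplanes at distance `h`. -/
def heightOf {d : ℕ} (B : Set (Euc d)) : ℝ :=
  sInf {h : ℝ | 0 ≤ h ∧ ∃ u : Euc d, ‖u‖ = 1 ∧ ∃ a : ℝ,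
    ∀ x ∈ B, a ≤ (inner ℝ u x : ℝ) ∧ (inner ℝ u x : ℝ) ≤ a + h}

/-- A parallelepiped with center `p` and sides `v₁, …, v_d`. -/
def IsParallelepiped {d : ℕ} (T : Set (Euc d)) : Prop :=
  ∃ (p : Euc d) (v : Fin d → Euc d), LinearIndependent ℝ v ∧
    T = {x | ∃ α : Fin d → ℝ, (∀ i, α i ∈ Set.Icc (-1 : ℝ) 1) ∧ x = p + ∑ i, α i • v i}

/-- `T` is an envelope of `B`: a parallelepiped of smallest volume containing `B`. -/
def IsEnvelope {d : ℕ} (T B : Set (Euc d)) : Prop :=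
  IsParallelepiped T ∧ B ⊆ T ∧
    ∀ T' : Set (Euc d), IsParallelepiped T' → B ⊆ T' → volume T ≤ volume T'

/-- A box in `ℝ^d`: a product of `d` closed intervals. -/
def IsBox {d : ℕ} (B : Set (Euc d)) : Prop :=
  ∃ a b : Fin d → ℝ, B = {x : Euc d | ∀ i, x i ∈ Set.Icc (a i) (b i)}

/-- `Q` is `k'`-fat: every ball `B` centered in `Q` satisfies
`vol (B ∩ Q) ≥ min (vol B / k') (vol Q)`. -/
def IsFat {d : ℕ} (k' : ℝ) (Q : Set (Euc d)) : Prop :=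
  ∀ x ∈ Q, ∀ ρ : ℝ, 0 < ρ →
    min (volume (Metric.closedBall x ρ) / ENNReal.ofReal k') (volume Q)
      ≤ volume (Metric.closedBall x ρ ∩ Q)

/-- The strong product of two simple graphs. -/
def strongProd {α β : Type*} (G : SimpleGraph α) (H : SimpleGraph β) :
    SimpleGraph (α × β) where
  Adj x y := x ≠ y ∧ (x.1 = y.1 ∨ G.Adj x.1 y.1) ∧ (x.2 = y.2 ∨ H.Adj x.2 y.2)
  symm := ⟨by
    rintro ⟨a1, a2⟩ ⟨b1, b2⟩ ⟨hne, h1, h2⟩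
    refine ⟨hne.symm, ?_, ?_⟩
    · rcases h1 with h | h
      · exact Or.inl h.symm
      · exact Or.inr h.symm
    · rcases h2 with h | h
      · exact Or.inl h.symm
      · exact Or.inr h.symm⟩
  loopless := ⟨by
    rintro ⟨a1, a2⟩ ⟨hne, -, -⟩
    exact hne rfl⟩

/-- The graph `G⁺(N, l)`: add hubs `v₁, …, v_N` and internally disjoint paths of length `l`
from each hub to each vertex of `G`.  The internal vertices of the path from hub `i` to
vertex `u` are `(i, u, 0), …, (i, u, l-2)`. -/
def plusGraph {V : Type*} (G : SimpleGraph V) (N l : ℕ) :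
    SimpleGraph (V ⊕ (Fin N ⊕ Fin N × V × Fin (l - 1))) :=
  SimpleGraph.fromRel (fun x y =>
    match x, y with
    | Sum.inl u, Sum.inl w => G.Adj u w
    | Sum.inr (Sum.inl _), Sum.inl _ => l = 1
    | Sum.inr (Sum.inl i), Sum.inr (Sum.inr (j, _, t)) => i = j ∧ (t : ℕ) = 0
    | Sum.inr (Sum.inr (i, u, t)), Sum.inr (Sum.inr (j, w, t')) =>
        i = j ∧ u = w ∧ (t' : ℕ) = (t : ℕ) + 1
    | Sum.inr (Sum.inr (_, u, t)), Sum.inl w => u = w ∧ (t : ℕ) = l - 2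
    | _, _ => False)

/-- `γ_d`: the supremum over affine hyperplanes `H` of the `(d-1)`-dimensional Hausdorff
measure of the intersection of `H` with the unit cube. -/
def gammaConst (d : ℕ) : ℝ :=
  sSup {γ : ℝ | ∃ (u : Euc d) (a : ℝ), ‖u‖ = 1 ∧
    γ = (MeasureTheory.Measure.hausdorffMeasure ((d : ℝ) - 1)
      ({x : Euc d | (inner ℝ u x : ℝ) = a} ∩ {x : Euc d | ∀ i, x i ∈ Set.Icc (0 : ℝ) 1})).toReal}

/-- The sequence `ℓ_h`: `ℓ_1 = 1` and `ℓ_{h+1} = ℓ_h / (2(h+1))`. -/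
def ellSeq : ℕ → ℝ
  | 0 => 2
  | n + 1 => ellSeq n / (2 * (n + 1))

/-- The trapezoid `T_h` with vertices `(0,0)`, `(ℓ_h,0)`, `(ℓ_h, hℓ_h)`, `(0, 2hℓ_h)`. -/
def trapezoidShape (h : ℕ) : Set (Euc 2) :=
  convexHull ℝ {(!₂[0, 0] : Euc 2), !₂[ellSeq h, 0], !₂[ellSeq h, h * ellSeq h],
    !₂[0, 2 * h * ellSeq h]}

/-- An axis-aligned square `S_h` with sides of length `ℓ_h`. -/
def squareShape (h : ℕ) : Set (Euc 2) :=
  {x : Euc 2 | x 0 ∈ Set.Icc 0 (ellSeq h) ∧ x 1 ∈ Set.Icc 0 (ellSeq h)}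

/-- The set `S*` of shapes. -/
def SStar : Set (Set (Euc 2)) :=
  {B | ∃ h : ℕ, 0 < h ∧ (B = trapezoidShape h ∨ B = squareShape h)}

/-- A class of finite graphs is `⊑`-representable. -/
def SqRepresentable (𝒢 : ∀ V : Type, Fintype V → SimpleGraph V → Prop) : Prop :=
  ∃ d c s : ℕ, 0 < d ∧ 0 < c ∧ 0 < s ∧
    ∀ (V : Type) (instV : Fintype V) (G : SimpleGraph V), 𝒢 V instV G →
      ∃ S : Set (Set (Euc d)), (∀ B ∈ S, Convex ℝ B ∧ IsShape B) ∧
        S.Pairwise (SqComparable (s : ℝ)) ∧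
        ∃ φ : V → Set (Euc d), IsIntersectionRep G φ ∧ IsThin (c : ℝ) φ ∧ IsSShaped S φ

end

lemma vol_image_affine {d : ℕ} (a : Euc d) (r : ℝ) (C : Set (Euc d)) :
    volume ((fun p => a + r • p) '' C) = ENNReal.ofReal (|r|^d) * volume C := by
  have h : (fun p => a + r • p) '' C = a +ᵥ (r • C) := by
    rw [← Set.image_vadd, ← Set.image_smul, Set.image_image]
    rfl
  rw [h, measure_vadd, Measure.addHaar_smul]
  simp [abs_pow]

lemma shape_vol_pos {d : ℕ} {B : Set (Euc d)} (hc : Convex ℝ B)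
    (hB : affineSpan ℝ B = ⊤) : 0 < volume B := by
  obtain ⟨x, hx⟩ := hc.interior_nonempty_iff_affineSpan_eq_top.2 hB
  exact lt_of_lt_of_le (isOpen_interior.measure_pos volume ⟨x, hx⟩)
    (measure_mono interior_subset)

set_option maxHeartbeats 1000000 in
lemma key_lemma {d : ℕ} {s : ℝ} (hs : 1 ≤ s) {K C : Set (Euc d)} (hCK : C ⊆ K)
    (hK : Convex ℝ K) (hCc : IsCompact C) (hKfin : volume K ≠ ⊤)
    (hCpos : 0 < volume C) (hKC : volume K ≤ ENNReal.ofReal s * volume C)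
    {a : Euc d} (ha : a ∈ K) :
    ∃ lam c c', (1:ℝ)/(8*(⌈s*2^d⌉₊+1)) ≤ lam ∧ lam ≤ 1 ∧ c ∈ C ∧ c' ∈ C ∧
      c = lam • a + (1-lam) • c' := by
  by_contra hcon
  push_neg at hcon
  set m : ℕ := ⌈s*2^d⌉₊ + 1 with hmdef
  set ε : ℝ := 1/(8*((⌈s*2^d⌉₊:ℝ)+1)) with hεdef
  have hmε : ε = 1/(8*(m:ℝ)) := by rw [hεdef, hmdef]; push_cast; ring
  have hm0' : m ≠ 0 := by rw [hmdef]; exact Nat.succ_ne_zero _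
  have hm1 : (1:ℝ) ≤ m := by exact_mod_cast Nat.one_le_iff_ne_zero.2 hm0'
  have hε : 0 < ε := by positivity
  have hsm : s * 2^d < m := by
    have h1 : s * 2^d ≤ (⌈s*2^d⌉₊ : ℝ) := Nat.le_ceil _
    have h2 : ((⌈s*2^d⌉₊ : ℕ) : ℝ) + 1 = (m : ℝ) := by push_cast [hmdef]; ring
    linarith
  set lamf : ℕ → ℝ := fun i => 2*ε*i with hlamf
  set f : ℕ → Set (Euc d) := fun i => (fun p => (lamf i) • a + (1 - lamf i) • p) '' C with hf
  have hlam_nonneg : ∀ i, 0 ≤ lamf i := fun i => by positivity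
  have hlam_le : ∀ i < m, lamf i ≤ 1/4 := by
    intro i hi
    have : (i:ℝ) ≤ (m:ℝ) - 1 := by
      have : (i:ℝ) + 1 ≤ m := by exact_mod_cast hi
      linarith
    have hm0 : (0:ℝ) < m := by linarith
    have hrw : lamf i = 2*(i:ℝ)/(8*(m:ℝ)) := by simp only [hlamf, hmε]; ring
    rw [hrw, div_le_iff₀ (by positivity)]
    nlinarith
  have hsub : ∀ i, i < m → f i ⊆ K := by
    rintro i hi _ ⟨p, hp, rfl⟩
    exact hK ha (hCK hp) (hlam_nonneg i) (by have := hlam_le i hi; linarith) (by ring)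
  have hdisj : ∀ i j, i < j → j < m → Disjoint (f i) (f j) := by
    intro i j hij hj
    rw [Set.disjoint_left]
    rintro q ⟨c, hc, hq1⟩ ⟨c', hc', hq2⟩
    set li := lamf i with hli
    set lj := lamf j with hlj
    have hli4 : li ≤ 1/4 := hlam_le i (hij.trans hj)
    have hlj4 : lj ≤ 1/4 := hlam_le j hj
    have hline : 0 < 1 - li := by linarith
    have hlij : 2*ε ≤ lj - li := by
      have : (i:ℝ) + 1 ≤ j := by exact_mod_cast hij
      have : 2*ε*((i:ℝ)+1) ≤ 2*ε*j := by nlinarith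
      simp only [hli, hlj, hlamf]
      nlinarith
    set lam := (lj - li)/(1 - li) with hlamdef
    have heq : li • a + (1 - li) • c = lj • a + (1 - lj) • c' := hq1.trans hq2.symm
    have h2 : (1 - li) • c = (lj - li) • a + (1 - lj) • c' := by
      linear_combination (norm := module) heq
    have h3 : c = (1 - li)⁻¹ • ((lj - li) • a + (1 - lj) • c') := by
      rw [← h2, inv_smul_smul₀ hline.ne']
    have hs1 : (1 - li)⁻¹ * (lj - li) = lam := by rw [hlamdef]; field_simp
    have hs2 : (1 - li)⁻¹ * (1 - lj) = 1 - lam := by rw [hlamdef]; field_simp; ring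
    have hceq : c = lam • a + (1 - lam) • c' := by
      rw [h3, smul_add, smul_smul, smul_smul, hs1, hs2]
    have hεlam : ε ≤ lam := by
      rw [hlamdef, le_div_iff₀ hline]
      nlinarith [hlam_nonneg i, hε, hlij]
    have hlam1 : lam ≤ 1 := by
      rw [hlamdef, div_le_one hline]
      linarith
    exact hcon lam c c' hεlam hlam1 hc hc' hceq
  have hmeas : ∀ i, MeasurableSet (f i) :=
    fun i => (hCc.image (show Continuous (fun p : Euc d => (lamf i) • a + (1 - lamf i) • p) by fun_prop)).measurableSet
  have hCfin : volume C ≠ ⊤ := hCc.measure_ne_top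
  have hvol_lb : ∀ i ∈ Finset.range m, ENNReal.ofReal ((1/2)^d) * volume C ≤ volume (f i) := by
    intro i hi
    rw [Finset.mem_range] at hi
    have : volume (f i) = ENNReal.ofReal (|1 - lamf i|^d) * volume C := vol_image_affine _ _ _
    rw [this]
    refine mul_le_mul_left (ENNReal.ofReal_le_ofReal ?_) _
    have h1 : (1/2:ℝ) ≤ |1 - lamf i| := by
      rw [abs_of_nonneg (by have := hlam_le i hi; linarith)]
      have := hlam_le i hi; linarith
    exact pow_le_pow_left₀ (by norm_num) h1 d
  have hsum : (m : ℝ≥0∞) * (ENNReal.ofReal ((1/2)^d) * volume C) ≤ volume K := by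
    have hpd : (↑(Finset.range m) : Set ℕ).PairwiseDisjoint f := by
      intro i hi j hj hij
      simp only [Finset.coe_range, Set.mem_Iio] at hi hj
      rcases lt_or_gt_of_ne hij with h | h
      · exact hdisj i j h hj
      · exact (hdisj j i h hi).symm
    calc (m : ℝ≥0∞) * (ENNReal.ofReal ((1/2)^d) * volume C)
        = (Finset.range m).card • (ENNReal.ofReal ((1/2)^d) * volume C) := by
          rw [Finset.card_range, nsmul_eq_mul]
      _ ≤ ∑ i ∈ Finset.range m, volume (f i) := Finset.card_nsmul_le_sum _ _ _ hvol_lb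
      _ = volume (⋃ i ∈ Finset.range m, f i) := (measure_biUnion_finset hpd (fun i _ => hmeas i)).symm
      _ ≤ volume K := measure_mono (by
          intro z hz
          simp only [Set.mem_iUnion] at hz
          obtain ⟨i, hi, hzi⟩ := hz
          exact hsub i (Finset.mem_range.mp hi) hzi)
  have hfinal : (m : ℝ≥0∞) * ENNReal.ofReal ((1/2)^d) ≤ ENNReal.ofReal s := by
    have h := hsum.trans hKC
    rw [← mul_assoc] at h
    exact (ENNReal.mul_le_mul_iff_left hCpos.ne' hCfin).mp h
  have : (m:ℝ) * (1/2)^d ≤ s := by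
    rw [← ENNReal.ofReal_natCast, ← ENNReal.ofReal_mul (by positivity)] at hfinal
    exact (ENNReal.ofReal_le_ofReal_iff (by linarith)).mp hfinal
  have hhd : (1/2:ℝ)^d * 2^d = 1 := by rw [← mul_pow]; norm_num
  have h2d : (0:ℝ) < 2^d := by positivity
  have h4 := mul_le_mul_of_nonneg_right this h2d.le
  rw [mul_assoc, hhd, mul_one] at h4
  linarith

set_option maxHeartbeats 1000000 in
theorem stmt10 (s : ℝ) (hs : 1 ≤ s) (d : ℕ) (hd : 0 < d) :
    ∃ s' : ℝ, s ≤ s' ∧ ∀ B₁ B₂ : Set (Euc d),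
      Convex ℝ B₁ → Convex ℝ B₂ → IsShape B₁ → IsShape B₂ →
      SqComparable s B₁ B₂ → volume B₁ ≤ volume B₂ → SqIn s' B₁ B₂ := by
  have hs0 : (0:ℝ) < s := lt_of_lt_of_le one_pos hs
  set ε : ℝ := 1/(8*((⌈s*2^d⌉₊:ℝ)+1)) with hεdef
  have hε : 0 < ε := by positivity
  set s' : ℝ := s / ε^d with hs'def
  have hεs' : ε^d * s' = s := by
    rw [hs'def]; field_simp
  have hε1 : ε ≤ 1 := by
    rw [hεdef]
    rw [div_le_one (by positivity)]
    have : (0:ℝ) ≤ (⌈s*2^d⌉₊:ℝ) := Nat.cast_nonneg _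
    linarith
  have hεd1 : ε^d ≤ 1 := pow_le_one₀ hε.le hε1
  have hεdpos : 0 < ε^d := pow_pos hε d
  have hss' : s ≤ s' := by
    rw [hs'def, le_div_iff₀ hεdpos]
    nlinarith
  have hs'0 : (0:ℝ) < s' := lt_of_lt_of_le hs0 hss'
  refine ⟨s', hss', ?_⟩
  intro B₁ B₂ hcv1 hcv2 hsh1 hsh2 hcomp hvol
  rcases hcomp with h | h
  · intro x hx
    obtain ⟨v, h1, h2⟩ := h x hx
    exact ⟨v, h1, le_trans (ENNReal.div_le_div_left (ENNReal.ofReal_le_ofReal hss') _) h2⟩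
  · -- hard case : SqIn s B₂ B₁
    have hB2pos : 0 < volume B₂ := shape_vol_pos hcv2 hsh2.2
    obtain ⟨y, hy⟩ : B₁.Nonempty := by
      obtain ⟨y, hy⟩ := hcv1.interior_nonempty_iff_affineSpan_eq_top.2 hsh1.2
      exact ⟨y, interior_subset hy⟩
    obtain ⟨w, hyw, hw⟩ := h y hy
    set K : Set (Euc d) := w +ᵥ B₂ with hKdef
    set C : Set (Euc d) := K ∩ B₁ with hCdef
    have hKconv : Convex ℝ K := hcv2.vadd w
    have hKcomp : IsCompact K := by
      rw [hKdef, ← Set.image_vadd]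
      exact hsh2.1.image (continuous_const.add continuous_id)
    have hCcomp : IsCompact C := hKcomp.inter_right hsh1.1.isClosed
    have hvolK : volume K = volume B₂ := measure_vadd _ _ _
    have hCge : volume B₂ / ENNReal.ofReal s ≤ volume C := hw
    have hofs0 : ENNReal.ofReal s ≠ 0 := (ENNReal.ofReal_pos.mpr hs0).ne'
    have hCpos : 0 < volume C :=
      lt_of_lt_of_le (ENNReal.div_pos hB2pos.ne' ENNReal.ofReal_ne_top) hCge
    have hKC : volume K ≤ ENNReal.ofReal s * volume C := by
      rw [hvolK]
      calc volume B₂ = volume B₂ / ENNReal.ofReal s * ENNReal.ofReal s :=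
            (ENNReal.div_mul_cancel hofs0 ENNReal.ofReal_ne_top).symm
        _ ≤ volume C * ENNReal.ofReal s := mul_le_mul_left hCge _
        _ = ENNReal.ofReal s * volume C := mul_comm _ _
    intro x hx
    have ha : w + x ∈ K := by
      rw [hKdef]
      exact Set.vadd_mem_vadd_set hx
    obtain ⟨lam, c, c', hlamε, hlam1, hcC, hc'C, hceq⟩ :=
      key_lemma hs Set.inter_subset_left hKconv hCcomp hKcomp.measure_ne_top hCpos hKC ha
    have hlam0 : 0 < lam := lt_of_lt_of_le hε hlamε
    refine ⟨x - c, ?_, ?_⟩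
    · exact Set.mem_vadd_set.mpr ⟨c, hcC.2, by rw [vadd_eq_add]; abel⟩
    · set M : Set (Euc d) := (fun p => (lam • (-w) + (1-lam) • x) + lam • p) '' C with hMdef
      have hMsub : M ⊆ ((x - c) +ᵥ B₁) ∩ B₂ := by
        rintro _ ⟨p, hp, rfl⟩
        constructor
        · refine Set.mem_vadd_set.mpr ⟨lam • p + (1-lam) • c',
            hcv1 hp.2 hc'C.2 hlam0.le (by linarith) (by ring), ?_⟩
          rw [vadd_eq_add, hceq]
          module
        · obtain ⟨b₂, hb₂, hpw⟩ := Set.mem_vadd_set.mp hp.1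
          have hrw : (lam • (-w) + (1-lam) • x) + lam • p = lam • b₂ + (1-lam) • x := by
            rw [← hpw, vadd_eq_add]
            module
          show lam • -w + (1 - lam) • x + lam • p ∈ B₂
          rw [hrw]
          exact hcv2 hb₂ hx hlam0.le (by linarith) (by ring)
      have hMvol : volume M = ENNReal.ofReal (|lam|^d) * volume C := vol_image_affine _ _ _
      -- final chain
      have hB1fin : volume B₁ ≠ ⊤ := hsh1.1.measure_ne_top
      have hofs'0 : ENNReal.ofReal s' ≠ 0 := (ENNReal.ofReal_pos.mpr hs'0).ne'
      rw [ENNReal.div_le_iff hofs'0 ENNReal.ofReal_ne_top]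
      have hX : ENNReal.ofReal (ε^d) * (volume B₁ / ENNReal.ofReal s)
          ≤ volume (((x - c) +ᵥ B₁) ∩ B₂) := by
        calc ENNReal.ofReal (ε^d) * (volume B₁ / ENNReal.ofReal s)
            ≤ ENNReal.ofReal (|lam|^d) * volume C := by
              refine mul_le_mul' (ENNReal.ofReal_le_ofReal ?_) ?_
              · rw [abs_of_pos hlam0]
                exact pow_le_pow_left₀ hε.le hlamε d
              · exact le_trans (ENNReal.div_le_div_right hvol _) hCge
          _ = volume M := hMvol.symm
          _ ≤ volume (((x - c) +ᵥ B₁) ∩ B₂) := measure_mono hMsub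
      calc volume B₁ = volume B₁ / ENNReal.ofReal s * ENNReal.ofReal s :=
            (ENNReal.div_mul_cancel hofs0 ENNReal.ofReal_ne_top).symm
        _ = volume B₁ / ENNReal.ofReal s * (ENNReal.ofReal (ε^d) * ENNReal.ofReal s') := by
            rw [← ENNReal.ofReal_mul hεdpos.le, hεs']
        _ = ENNReal.ofReal (ε^d) * (volume B₁ / ENNReal.ofReal s) * ENNReal.ofReal s' := by
            ring
        _ ≤ volume (((x - c) +ᵥ B₁) ∩ B₂) * ENNReal.ofReal s' := by
            exact mul_le_mul_left hX _
end

section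
/- For all positive integers r and t, the strong product T_r ⊠ P_t of the star with r+1 vertices and the path with t vertices admits a (4,⊑_1)-tame S-shaped intersection representation in ℝ³, where S is the set of boxes in ℝ³. -/
open MeasureTheory Set Pointwise Metric Function
open scoped RealInnerProductSpace ENNReal

section BoxHelpers

def toEuc (f : Fin 3 → ℝ) : Euc 3 := WithLp.toLp 2 f

@[simp] lemma toEuc_apply (f : Fin 3 → ℝ) (i : Fin 3) : toEuc f i = f i := rfl

def box3 (a b : Fin 3 → ℝ) : Set (Euc 3) := {x : Euc 3 | ∀ i, x i ∈ Set.Icc (a i) (b i)}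

lemma mem_box3 {a b : Fin 3 → ℝ} {x : Euc 3} :
    x ∈ box3 a b ↔ ∀ i, a i ≤ x i ∧ x i ≤ b i := Iff.rfl

lemma box3_nonempty {a b : Fin 3 → ℝ} (h : ∀ i, a i ≤ b i) : (box3 a b).Nonempty :=
  ⟨toEuc a, fun i => ⟨le_rfl, h i⟩⟩

lemma convex_box3 (a b : Fin 3 → ℝ) : Convex ℝ (box3 a b) := by
  intro x hx y hy p q hp hq hpq i
  exact convex_Icc (a i) (b i) (hx i) (hy i) hp hq hpq

lemma isCompact_box3 (a b : Fin 3 → ℝ) : IsCompact (box3 a b) := by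
  have h : box3 a b =
      (⇑(EuclideanSpace.equiv (Fin 3) ℝ).symm) '' (Set.univ.pi fun i => Set.Icc (a i) (b i)) := by
    ext x
    constructor
    · intro hx; exact ⟨x, fun i _ => hx i, rfl⟩
    · rintro ⟨y, hy, rfl⟩ i; exact hy i (Set.mem_univ i)
  rw [h]
  exact (isCompact_univ_pi fun i => isCompact_Icc).image
    (EuclideanSpace.equiv (Fin 3) ℝ).symm.continuous

lemma affineSpan_box3 {a b : Fin 3 → ℝ} (h : ∀ i, a i < b i) : affineSpan ℝ (box3 a b) = ⊤ := by
  have hne : (box3 a b).Nonempty := box3_nonempty (fun i => (h i).le)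
  rw [AffineSubspace.affineSpan_eq_top_iff_vectorSpan_eq_top_of_nonempty ℝ (Euc 3) (Euc 3) hne]
  rw [eq_top_iff, ← (EuclideanSpace.basisFun (Fin 3) ℝ).toBasis.span_eq]
  refine Submodule.span_le.2 ?_
  rintro _ ⟨i, rfl⟩
  have hp : toEuc a ∈ box3 a b := fun k => ⟨le_rfl, (h k).le⟩
  have hq : toEuc (fun k => a k + if k = i then b i - a i else 0) ∈ box3 a b := by
    intro k
    have h0 : (0:ℝ) ≤ if k = i then b i - a i else 0 := by
      split_ifs
      · linarith [h i]
      · exact le_rfl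
    simp only [toEuc_apply, Set.mem_Icc]
    constructor
    · linarith
    · split_ifs with hk
      · subst hk; linarith
      · linarith [h k]
  have hmem := vsub_mem_vectorSpan ℝ hq hp
  have key : ((EuclideanSpace.basisFun (Fin 3) ℝ).toBasis : _ → Euc 3) i
      = (b i - a i)⁻¹ • (toEuc (fun k => a k + if k = i then b i - a i else 0) -ᵥ toEuc a) := by
    have hba : b i - a i ≠ 0 := ne_of_gt (sub_pos.2 (h i))
    ext k
    show (EuclideanSpace.basisFun (Fin 3) ℝ).toBasis i k
      = (b i - a i)⁻¹ * ((a k + if k = i then b i - a i else 0) - a k)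
    rw [OrthonormalBasis.coe_toBasis, EuclideanSpace.basisFun_apply,
      EuclideanSpace.single_apply]
    split_ifs with hk
    · field_simp
      ring
    · ring
  rw [key]
  exact Submodule.smul_mem _ _ hmem

lemma mem_vadd_box3 {v x : Euc 3} {a b : Fin 3 → ℝ} :
    x ∈ v +ᵥ box3 a b ↔ ∀ i, v i + a i ≤ x i ∧ x i ≤ v i + b i := by
  rw [Set.mem_vadd_set]
  constructor
  · rintro ⟨y, hy, rfl⟩ i
    have h1 := (hy i).1
    have h2 := (hy i).2
    have hvy : (v +ᵥ y) i = v i + y i := rfl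
    rw [hvy]
    constructor <;> linarith
  · intro hx
    refine ⟨x - v, fun i => ?_, by simp [vadd_eq_add]⟩
    have hxv : (x - v) i = x i - v i := rfl
    rw [hxv]
    exact ⟨by linarith [(hx i).1], by linarith [(hx i).2]⟩

lemma sqIn_box3 {a b c d : Fin 3 → ℝ} (hab : ∀ i, a i ≤ b i) (hcd : ∀ i, c i ≤ d i)
    (hdim : ∀ i, b i - a i ≤ d i - c i) : SqIn 1 (box3 a b) (box3 c d) := by
  intro x hx
  set v : Euc 3 := toEuc (fun i => min (x i) (d i - (b i - a i)) - a i) with hv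
  have hvi : ∀ i, v i = min (x i) (d i - (b i - a i)) - a i := fun i => rfl
  have hxv : x ∈ v +ᵥ box3 a b := by
    rw [mem_vadd_box3]
    intro i
    have h1 := (hx i).1
    have h2 := (hx i).2
    have hmin : x i - (b i - a i) ≤ min (x i) (d i - (b i - a i)) :=
      le_min (by linarith [hab i]) (by linarith)
    rw [hvi]
    constructor
    · linarith [min_le_left (x i) (d i - (b i - a i))]
    · linarith
  have hsubset : (v +ᵥ box3 a b) ⊆ box3 c d := by
    intro y hy
    rw [mem_vadd_box3] at hy
    intro i
    have h1 := (hy i).1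
    have h2 := (hy i).2
    rw [hvi] at h1 h2
    have hmin1 : c i ≤ min (x i) (d i - (b i - a i)) := le_min (hx i).1 (by linarith [hdim i])
    have hmin2 : min (x i) (d i - (b i - a i)) ≤ d i - (b i - a i) := min_le_right _ _
    exact ⟨by linarith, by linarith⟩
  refine ⟨v, hxv, ?_⟩
  rw [Set.inter_eq_left.2 hsubset, MeasureTheory.measure_vadd volume v _,
    ENNReal.ofReal_one]
  exact le_of_eq (by simp)

lemma box3_inter_nonempty_iff {a b a' b' : Fin 3 → ℝ} (h : ∀ i, a i ≤ b i)
    (h' : ∀ i, a' i ≤ b' i) :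
    (box3 a b ∩ box3 a' b').Nonempty ↔ ∀ i, a' i ≤ b i ∧ a i ≤ b' i := by
  constructor
  · rintro ⟨x, hx1, hx2⟩ i
    exact ⟨le_trans (hx2 i).1 (hx1 i).2, le_trans (hx1 i).1 (hx2 i).2⟩
  · intro hcond
    refine ⟨toEuc (fun i => max (a i) (a' i)), fun i => ⟨le_max_left _ _, ?_⟩,
      fun i => ⟨le_max_right _ _, ?_⟩⟩
    · exact max_le (h i) (hcond i).1
    · exact max_le (hcond i).2 (h' i)

end BoxHelpers

theorem stmt11 (r t : ℕ) (hr : 0 < r) (ht : 0 < t) :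
    ∃ φ : (Fin 1 ⊕ Fin r) × Fin t → Set (Euc 3),
      IsTame 4 1
        (strongProd (completeBipartiteGraph (Fin 1) (Fin r)) (SimpleGraph.pathGraph t)) φ ∧
      IsSShaped {B : Set (Euc 3) | IsBox B} φ := by
  classical
  set lo : Fin 1 ⊕ Fin r → ℝ := Sum.elim (fun _ => 0) (fun i => 2 * (i.val : ℝ)) with hlo
  set hi : Fin 1 ⊕ Fin r → ℝ :=
    Sum.elim (fun _ => 2 * (r : ℝ)) (fun i => 2 * (i.val : ℝ) + 1) with hhi
  set A : (Fin 1 ⊕ Fin r) × Fin t → Fin 3 → ℝ :=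
    fun v => ![(v.2.val : ℝ), lo v.1, 0] with hA
  set B : (Fin 1 ⊕ Fin r) × Fin t → Fin 3 → ℝ :=
    fun v => ![(v.2.val : ℝ) + 1, hi v.1, 1] with hB
  have hlohi' : ∀ c, lo c < hi c := by
    rintro (a | i)
    · show (0 : ℝ) < 2 * r
      have : (1 : ℝ) ≤ r := by exact_mod_cast hr
      linarith
    · show (2 : ℝ) * i.val < 2 * i.val + 1
      linarith
  have hlohi : ∀ c, lo c ≤ hi c := fun c => (hlohi' c).le
  have hAB : ∀ v i, A v i ≤ B v i := by
    intro v i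
    fin_cases i <;> simp [hA, hB]
    · exact hlohi v.1
  have hAB' : ∀ v i, A v i < B v i := by
    intro v i
    fin_cases i <;> simp [hA, hB]
    · exact hlohi' v.1
  refine ⟨fun v => box3 (A v) (B v), ⟨⟨fun v => box3_nonempty (hAB v), ?_⟩, ?_, ?_, ?_⟩, ?_⟩
  · -- intersection iff adjacency
    rintro ⟨c, j⟩ ⟨c', j'⟩ huv
    rw [box3_inter_nonempty_iff (hAB _) (hAB _)]
    have hcoord : (∀ i, A (c', j') i ≤ B (c, j) i ∧ A (c, j) i ≤ B (c', j') i) ↔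
        ((lo c' ≤ hi c ∧ lo c ≤ hi c') ∧
          ((j'.val : ℝ) ≤ (j.val : ℝ) + 1 ∧ (j.val : ℝ) ≤ (j'.val : ℝ) + 1)) := by
      constructor
      · intro h
        have h0 := h 0
        have h1 := h 1
        simp [hA, hB] at h0 h1
        exact ⟨h1, h0⟩
      · rintro ⟨hy, hx⟩ i
        fin_cases i <;> simp [hA, hB]
        · exact hx
        · exact hy
    rw [hcoord]
    have hpath : ((j'.val : ℝ) ≤ (j.val : ℝ) + 1 ∧ (j.val : ℝ) ≤ (j'.val : ℝ) + 1) ↔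
        (j = j' ∨ (SimpleGraph.pathGraph t).Adj j j') := by
      rw [SimpleGraph.pathGraph_adj, Fin.ext_iff]
      constructor
      · rintro ⟨hy1, hy2⟩
        have n1 : j'.val ≤ j.val + 1 := by exact_mod_cast hy1
        have n2 : j.val ≤ j'.val + 1 := by exact_mod_cast hy2
        omega
      · intro h
        have : j'.val ≤ j.val + 1 ∧ j.val ≤ j'.val + 1 := by omega
        constructor <;> exact_mod_cast (by omega : _ )
    have hbip : (lo c' ≤ hi c ∧ lo c ≤ hi c') ↔
        (c = c' ∨ (completeBipartiteGraph (Fin 1) (Fin r)).Adj c c') := by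
      have hbd : ∀ i0 : Fin r, (2 : ℝ) * i0.val + 1 ≤ 2 * r := by
        intro i0
        have : (i0.val : ℝ) + 1 ≤ r := by exact_mod_cast i0.isLt
        linarith
      rcases c with a | i <;> rcases c' with a' | i'
      · exact ⟨fun _ => Or.inl (congrArg Sum.inl (Subsingleton.elim a a')),
          fun _ => ⟨hlohi _, hlohi _⟩⟩
      · constructor
        · intro _
          exact Or.inr (by simp)
        · intro _
          constructor
          · show (2 : ℝ) * i'.val ≤ 2 * r
            linarith [hbd i']
          · show (0 : ℝ) ≤ 2 * i'.val + 1
            positivity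
      · constructor
        · intro _
          exact Or.inr (by simp)
        · intro _
          constructor
          · show (0 : ℝ) ≤ 2 * i.val + 1
            positivity
          · show (2 : ℝ) * i.val ≤ 2 * r
            linarith [hbd i]
      · constructor
        · rintro ⟨h1, h2⟩
          have n1 : (2 : ℝ) * i'.val ≤ 2 * i.val + 1 := h1
          have n2 : (2 : ℝ) * i.val ≤ 2 * i'.val + 1 := h2
          have m1 : 2 * i'.val ≤ 2 * i.val + 1 := by exact_mod_cast n1
          have m2 : 2 * i.val ≤ 2 * i'.val + 1 := by exact_mod_cast n2
          exact Or.inl (congrArg Sum.inr (Fin.ext (by omega)))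
        · rintro (h | h)
          · obtain rfl : i = i' := by
              simpa using h
            refine ⟨?_, ?_⟩ <;> show (2 : ℝ) * i.val ≤ 2 * i.val + 1 <;> linarith
          · exact absurd h (by simp)
    rw [hpath, hbip]
    constructor
    · rintro ⟨h1, h2⟩
      exact ⟨huv, h1, h2⟩
    · rintro ⟨_, h1, h2⟩
      exact ⟨h1, h2⟩
  · -- 4-thin
    intro x
    set S : Set ((Fin 1 ⊕ Fin r) × Fin t) := {v | x ∈ box3 (A v) (B v)} with hS
    set code : Fin 1 ⊕ Fin r → ℤ := Sum.elim (fun _ => (-1 : ℤ)) (fun i => (i.val : ℤ)) with hcode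
    set F : (Fin 1 ⊕ Fin r) × Fin t → ℤ × ℤ := fun v => (code v.1, (v.2.val : ℤ)) with hF
    set n : ℤ := ⌊x 0⌋ with hn
    set m : ℤ := ⌊x 1 / 2⌋ with hm
    set T : Set (ℤ × ℤ) := {(-1, n - 1), (-1, n), (m, n - 1), (m, n)} with hT
    have hTfin : T.Finite := Set.toFinite T
    have hmem : ∀ v ∈ S, F v ∈ T := by
      rintro ⟨c, j⟩ hv
      have h0 := hv 0
      have h1 := hv 1
      simp [hA, hB] at h0 h1
      have hj : (j.val : ℤ) = n - 1 ∨ (j.val : ℤ) = n := by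
        have l1 : (j.val : ℤ) ≤ n := Int.le_floor.2 (by exact_mod_cast h0.1)
        have l2 : n ≤ (j.val : ℤ) + 1 := by
          have := Int.floor_le_floor (R := ℝ) h0.2
          rwa [show ((j.val : ℝ) + 1) = (((j.val : ℤ) + 1 : ℤ) : ℝ) by push_cast; ring,
            Int.floor_intCast] at this
        omega
      have hc : code c = -1 ∨ code c = m := by
        rcases c with a | i
        · left; simp [hcode]
        · right
          simp [hcode, hlo, hhi] at h1 ⊢
          rw [hm]
          symm
          rw [Int.floor_eq_iff]
          constructor
          · push_cast; linarith
          · push_cast; linarith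
      rcases hc with hc | hc <;> rcases hj with hj | hj <;>
        simp [hF, hT, hc, hj]
    have hinj : Set.InjOn F S := by
      rintro ⟨c, j⟩ - ⟨c', j'⟩ - heq
      simp only [hF, Prod.mk.injEq] at heq
      obtain ⟨hcc, hjj⟩ := heq
      have hj : j = j' := Fin.ext (by exact_mod_cast hjj)
      have hc : c = c' := by
        rcases c with a | i <;> rcases c' with a' | i'
        · exact congrArg Sum.inl (Subsingleton.elim a a')
        · exact absurd hcc (by simp only [hcode, Sum.elim_inl, Sum.elim_inr]; omega)
        · exact absurd hcc (by simp only [hcode, Sum.elim_inl, Sum.elim_inr]; omega)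
        · simp only [hcode, Sum.elim_inr] at hcc
          exact congrArg Sum.inr (Fin.ext (by exact_mod_cast hcc))
      rw [hc, hj]
    have hcard : S.ncard ≤ T.ncard := Set.ncard_le_ncard_of_injOn F hmem hinj hTfin
    have hT4 : T.ncard ≤ 4 := by
      have e1 := Set.ncard_insert_le ((-1 : ℤ), n - 1) ({(-1, n), (m, n - 1), (m, n)} : Set (ℤ × ℤ))
      have e2 := Set.ncard_insert_le ((-1 : ℤ), n) ({(m, n - 1), (m, n)} : Set (ℤ × ℤ))
      have e3 := Set.ncard_insert_le ((m : ℤ), n - 1) ({(m, n)} : Set (ℤ × ℤ))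
      have e4 : ({((m : ℤ), n)} : Set (ℤ × ℤ)).ncard = 1 := Set.ncard_singleton _
      rw [hT]
      omega
    have : S.ncard ≤ 4 := le_trans hcard hT4
    exact_mod_cast this
  · -- convex shapes
    intro v
    exact ⟨convex_box3 _ _, isCompact_box3 _ _, affineSpan_box3 (hAB' v)⟩
  · -- sq-comparable
    rintro ⟨cu, ju⟩ ⟨cv, jv⟩
    have hlen : ∀ w w' : (Fin 1 ⊕ Fin r) × Fin t, hi w.1 - lo w.1 ≤ hi w'.1 - lo w'.1 →
        SqIn 1 (box3 (A w) (B w)) (box3 (A w') (B w')) := by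
      intro w w' h
      refine sqIn_box3 (hAB w) (hAB w') (fun i => ?_)
      fin_cases i <;> simp [hA, hB] <;> linarith
    have hone : (1 : ℝ) ≤ r := by exact_mod_cast hr
    rcases cu with a | i <;> rcases cv with a' | i'
    · exact Or.inl (hlen (Sum.inl a, ju) (Sum.inl a', jv)
        (by show (2:ℝ)*r - 0 ≤ 2*r - 0; linarith))
    · exact Or.inr (hlen (Sum.inr i', jv) (Sum.inl a, ju)
        (by show (2:ℝ)*i'.val + 1 - 2*i'.val ≤ 2*r - 0; linarith))
    · exact Or.inl (hlen (Sum.inr i, ju) (Sum.inl a', jv)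
        (by show (2:ℝ)*i.val + 1 - 2*i.val ≤ 2*r - 0; linarith))
    · exact Or.inl (hlen (Sum.inr i, ju) (Sum.inr i', jv)
        (by show (2:ℝ)*i.val + 1 - 2*i.val ≤ 2*i'.val + 1 - 2*i'.val; linarith))
  · -- S-shaped
    intro v
    exact ⟨box3 (A v) (B v), ⟨A v, B v, rfl⟩, 0, (zero_vadd _ _).symm⟩
end
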